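/- Let μ > 0, a₀ ∈ ℝ, and set a(t) = a₀ − μ t and α(t) = a(t)/μ^{2/3}. Let u : ℝ → ℝ be a not-identically-zero, twice continuously differentiable solution of the Airy equation u''(s) = s·u(s), and suppose α* < α(0) is such that u(α*) = 0 and u(s) > 0 for all s ∈ (α*, α(0)]. Let t* := (a₀ − μ^{2/3} α*)/μ. Then x(t) := −μ^{1/3} u'(α(t))/u(α(t)) solves x'(t) = a(t) − x(t)² on [0, t*) and x(t) → −∞ as t → (t*)⁻; moreover a(t*) = μ^{2/3} α*. (This is the delayed tipping point a_d = μ^{2/3} α*: when u = Ai and α* is the first zero of Ai, tipping occurs at a = μ^{2/3}·(−2.33810...).) -/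

import Mathlib

open Real Filter Topology

/-- A `C²` solution of the Airy equation vanishing to first order at `s0` vanishes on `[s0, b]`. -/
lemma airy_vanish (u : ℝ → ℝ) (hu : ContDiff ℝ 2 u)
    (hairy : ∀ s, deriv (deriv u) s = s * u s) (s0 b : ℝ) (hle : s0 ≤ b)
    (h0 : u s0 = 0) (h0' : deriv u s0 = 0) : u b = 0 := by
  have hud : Differentiable ℝ u := hu.differentiable (by norm_num)
  have hd1 : ContDiff ℝ 1 (deriv u) := by
    have h2 : ContDiff ℝ ((1 : ℕ∞) + 1) u := by convert hu using 2; rfl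
    exact (contDiff_succ_iff_deriv.mp h2).2.2
  have hdd : Differentiable ℝ (deriv u) := hd1.differentiable one_ne_zero
  set M : ℝ := max |s0| |b| with hM
  have hM0 : 0 ≤ M := le_max_iff.2 (Or.inl (abs_nonneg _))
  set c : ℝ → ℝ := fun t => max s0 (min t b) with hc
  set v : ℝ → ℝ × ℝ → ℝ × ℝ := fun t p => (p.2, c t * p.1) with hv
  have hcb : ∀ t, |c t| ≤ M := by
    intro t
    have h1 : s0 ≤ c t := le_max_left _ _
    have h2 : c t ≤ b := max_le (hle) (min_le_right _ _)
    rw [abs_le]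
    constructor
    · have := neg_abs_le s0
      linarith [le_max_left |s0| |b|]
    · have := le_abs_self b
      linarith [le_max_right |s0| |b|]
  have hlip : ∀ t, LipschitzWith (1 + M).toNNReal (v t) := by
    intro t
    apply LipschitzWith.of_dist_le_mul
    intro p q
    have hcoe : ((1 + M).toNNReal : ℝ) = 1 + M := Real.coe_toNNReal _ (by linarith)
    rw [hcoe, Prod.dist_eq, Prod.dist_eq]
    simp only [hv, Real.dist_eq]
    have h1 : |p.2 - q.2| ≤ max |p.1 - q.1| |p.2 - q.2| := le_max_right _ _
    have h2 : |c t * p.1 - c t * q.1| = |c t| * |p.1 - q.1| := by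
      rw [← mul_sub, abs_mul]
    have h3 : |c t| ≤ M := hcb t
    have h4 : |p.1 - q.1| ≤ max |p.1 - q.1| |p.2 - q.2| := le_max_left _ _
    have h5 : (0:ℝ) ≤ max |p.1 - q.1| |p.2 - q.2| := le_trans (abs_nonneg _) h4
    apply max_le
    · nlinarith
    · rw [h2]; nlinarith [abs_nonneg (p.1 - q.1)]
  set F : ℝ → ℝ × ℝ := fun t => (u t, deriv u t) with hF
  have hFc : ContinuousOn F (Set.Icc s0 b) :=
    (hud.continuous.prodMk hdd.continuous).continuousOn
  have hF' : ∀ t ∈ Set.Ico s0 b, HasDerivWithinAt F (v t (F t)) (Set.Ici t) t := by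
    intro t ht
    have h1 : HasDerivAt u (deriv u t) t := (hud t).hasDerivAt
    have h2 : HasDerivAt (deriv u) (t * u t) t := by
      rw [← hairy t]; exact (hdd t).hasDerivAt
    have hct : c t = t := by
      rw [hc]; simp only []
      rw [min_eq_left ht.2.le, max_eq_right ht.1]
    have := (h1.prodMk h2).hasDerivWithinAt (s := Set.Ici t)
    simpa [hv, hF, hct] using this
  have hg' : ∀ t ∈ Set.Ico s0 b,
      HasDerivWithinAt (fun _ : ℝ => ((0:ℝ), (0:ℝ))) (v t ((0:ℝ), (0:ℝ))) (Set.Ici t) t := by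
    intro t ht
    have : v t ((0:ℝ), (0:ℝ)) = ((0:ℝ), (0:ℝ)) := by simp [hv]
    rw [this]
    exact (hasDerivAt_const t _).hasDerivWithinAt
  have heq := ODE_solution_unique hlip hFc hF' continuousOn_const hg'
    (by simp [hF, h0, h0']) (Set.right_mem_Icc.2 hle)
  have : u b = (F b).1 := rfl
  rw [this, heq]

/-- With `a t = a₀ - μ t`, `α t = a t / μ^(2/3)`, `u` a nontrivial `C²` solution
of the Airy equation with `u αs = 0`, `u > 0` on `(αs, α 0]` and `αs < α 0`, the function
`x t = -μ^(1/3) u'(α t)/u(α t)` solves `x' = a t - x²` on `[0, t⋆)` with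
`t⋆ = (a₀ - μ^(2/3) αs)/μ`, blows up to `-∞` as `t → t⋆⁻`, and `a t⋆ = μ^(2/3) αs`
(the delayed tipping point `a_d = μ^(2/3) αs`). -/
theorem delayed_tipping_at_airy_zero
    (μ a₀ : ℝ) (hμ : 0 < μ)
    (u : ℝ → ℝ) (hu : ContDiff ℝ 2 u) (hune : ∃ s, u s ≠ 0)
    (hairy : ∀ s, deriv (deriv u) s = s * u s)
    (a α : ℝ → ℝ)
    (ha : a = fun t => a₀ - μ * t)
    (hα : α = fun t => a t / μ ^ ((2 : ℝ) / 3))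
    (αs : ℝ) (hlt : αs < α 0) (hzero : u αs = 0)
    (hpos : ∀ s ∈ Set.Ioc αs (α 0), 0 < u s)
    (ts : ℝ) (hts : ts = (a₀ - μ ^ ((2 : ℝ) / 3) * αs) / μ)
    (x : ℝ → ℝ)
    (hx : x = fun t => -μ ^ ((1 : ℝ) / 3) * deriv u (α t) / u (α t)) :
    (∀ t ∈ Set.Ico (0 : ℝ) ts, HasDerivAt x (a t - (x t) ^ 2) t) ∧
    Tendsto x (𝓝[<] ts) atBot ∧
    a ts = μ ^ ((2 : ℝ) / 3) * αs := by
  have hud : Differentiable ℝ u := hu.differentiable (by norm_num)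
  have hd1 : ContDiff ℝ 1 (deriv u) := by
    have h2 : ContDiff ℝ ((1 : ℕ∞) + 1) u := by convert hu using 2; rfl
    exact (contDiff_succ_iff_deriv.mp h2).2.2
  have hdd : Differentiable ℝ (deriv u) := hd1.differentiable one_ne_zero
  set c := μ ^ ((1 : ℝ) / 3) with hcdef
  have hc : 0 < c := Real.rpow_pos_of_pos hμ _
  have hm : 0 < μ ^ ((2 : ℝ) / 3) := Real.rpow_pos_of_pos hμ _
  have hc2 : c * c = μ ^ ((2 : ℝ) / 3) := by
    rw [hcdef, ← Real.rpow_add hμ]; norm_num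
  have hμc : μ / μ ^ ((2 : ℝ) / 3) = c := by
    rw [hcdef, show (1 : ℝ) / 3 = 1 - 2 / 3 by norm_num, Real.rpow_sub hμ, Real.rpow_one]
  have hαt : ∀ t, α t = α 0 - c * t := by
    intro t
    rw [hα, ha, ← hμc]
    simp only []
    field_simp
    ring
  have haα : ∀ τ, a τ = c * c * α τ := by
    intro τ
    rw [hα]
    simp only []
    rw [hc2]
    field_simp
  have hαd : ∀ t : ℝ, HasDerivAt α (-c) t := by
    intro t
    have h : HasDerivAt (fun s : ℝ => α 0 - c * s) (-c) t := by
      simpa using ((hasDerivAt_id t).const_mul c).const_sub (α 0)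
    have hfun : α = fun s : ℝ => α 0 - c * s := funext hαt
    rw [hfun]
    exact h
  have hats : α ts = αs := by
    rw [hα, ha]
    simp only []
    rw [hts]
    field_simp
    ring
  have hpart3 : a ts = μ ^ ((2 : ℝ) / 3) * αs := by
    rw [ha]
    simp only []
    rw [hts]
    field_simp
    ring
  have hcts : c * ts = α 0 - αs := by
    have h := hαt ts
    rw [hats] at h
    linarith
  have hts0 : 0 < ts := by
    have h : ts = (α 0 - αs) / c := by
      rw [eq_div_iff hc.ne']
      linarith [hcts]
    rw [h]
    exact div_pos (by linarith) hc
  have hmem : ∀ t ∈ Set.Ico (0 : ℝ) ts, α t ∈ Set.Ioc αs (α 0) := by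
    intro t ht
    rw [hαt t]
    constructor
    · have h1 : c * t < c * ts := mul_lt_mul_of_pos_left ht.2 hc
      linarith
    · nlinarith [mul_nonneg hc.le ht.1]
  have hαcont : Continuous α := by
    rw [hα, ha]
    fun_prop
  -- positivity of deriv u αs
  have hds : 0 < deriv u αs := by
    rcases lt_trichotomy (deriv u αs) 0 with h | h | h
    · exfalso
      have hslope : Tendsto (slope u αs) (𝓝[>] αs) (𝓝 (deriv u αs)) :=
        (hasDerivAt_iff_tendsto_slope.mp (hud αs).hasDerivAt).mono_left
          (nhdsWithin_mono _ (fun s hs => ne_of_gt hs))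
      have hev : ∀ᶠ s in 𝓝[>] αs, slope u αs s < 0 := hslope.eventually_lt_const h
      have hmem' : Set.Ioc αs (α 0) ∈ 𝓝[>] αs := Ioc_mem_nhdsGT_of_mem ⟨le_rfl, hlt⟩
      obtain ⟨s, hs1, hs2⟩ := (hev.and hmem').exists
      have hsu : 0 < u s := hpos s hs2
      have hss : 0 < s - αs := sub_pos.2 hs2.1
      rw [slope_def_field, hzero, sub_zero] at hs1
      have : 0 < u s / (s - αs) := div_pos hsu hss
      -- slope_def_field : slope f a b = (f b - f a) / (b - a)
      linarith [this]
    · exfalso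
      have h0 := airy_vanish u hu hairy αs (α 0) hlt.le hzero h
      exact absurd h0 (hpos (α 0) ⟨hlt, le_rfl⟩).ne'
    · exact h
  refine ⟨?_, ?_, hpart3⟩
  · intro t ht
    have hune' : u (α t) ≠ 0 := (hpos _ (hmem t ht)).ne'
    have h1 : HasDerivAt (fun τ => deriv u (α τ)) (α t * u (α t) * (-c)) t := by
      have hD : HasDerivAt (deriv u) (α t * u (α t)) (α t) := by
        rw [← hairy]; exact (hdd (α t)).hasDerivAt
      exact hD.comp t (hαd t)
    have h2 : HasDerivAt (fun τ => u (α τ)) (deriv u (α t) * (-c)) t :=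
      ((hud (α t)).hasDerivAt).comp t (hαd t)
    have h3 := (h1.const_mul (-c)).div h2 hune'
    rw [hx]
    simp only []
    refine h3.congr_deriv ?_
    rw [haα t]
    field_simp
  · have htendα : Tendsto α (𝓝[<] ts) (𝓝[>] αs) := by
      apply tendsto_nhdsWithin_of_tendsto_nhds_of_eventually_within
      · rw [← hats]
        exact (hαcont.tendsto ts).mono_left nhdsWithin_le_nhds
      · filter_upwards [self_mem_nhdsWithin] with t (ht : t < ts)
        have h1 : c * t < c * ts := mul_lt_mul_of_pos_left ht hc
        rw [hαt t]
        simp only [Set.mem_Ioi]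
        linarith
    have hnum : Tendsto (fun t => -c * deriv u (α t)) (𝓝[<] ts) (𝓝 (-c * deriv u αs)) := by
      have hcont : Continuous fun t => -c * deriv u (α t) :=
        continuous_const.mul (hdd.continuous.comp hαcont)
      have h := hcont.tendsto ts
      rw [hats] at h
      exact h.mono_left nhdsWithin_le_nhds
    have hden : Tendsto (fun t => u (α t)) (𝓝[<] ts) (𝓝[>] (0 : ℝ)) := by
      apply tendsto_nhdsWithin_of_tendsto_nhds_of_eventually_within
      · have h := ((hu.continuous.comp hαcont).tendsto ts).mono_left
          (nhdsWithin_le_nhds (s := Set.Iio ts))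
        simp only [Function.comp] at h
        rwa [hats, hzero] at h
      · filter_upwards [Ioo_mem_nhdsLT_of_mem (⟨hts0, le_rfl⟩ : ts ∈ Set.Ioc 0 ts)] with t ht
        exact hpos _ (hmem t ⟨ht.1.le, ht.2⟩)
    have hinv : Tendsto (fun t => (u (α t))⁻¹) (𝓝[<] ts) atTop :=
      tendsto_inv_nhdsGT_zero.comp hden
    have hC : -c * deriv u αs < 0 := by nlinarith
    rw [hx]
    have hfin := Filter.Tendsto.neg_mul_atTop hC hnum hinv
    simpa only [div_eq_mul_inv] using hfin
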